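/- arXiv:2011.01534 — 2 statements merged into one kernel-verified Lean document; each statement's English description precedes it below -/
import Mathlib

section
/- Let n ≥ 1. For M, N ∈ U(n,n) define w(M,N;Z) := (1/(2π))·(L(MN,Z) − L(M,N⟨Z⟩) − L(N,Z)) for Z ∈ ℋ_n. Then w(M,N;Z) is an integer and is independent of Z (so one may write w(M,N)), and w is a cocycle: w(M₁M₂,M₃) + w(M₁,M₂) = w(M₁,M₂M₃) + w(M₂,M₃) for all M₁,M₂,M₃ ∈ U(n,n), and w(E,M) = w(M,E) = 0 for all M ∈ U(n,n), where E denotes the identity of U(n,n). -/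
noncomputable section
open Matrix Complex
open scoped ComplexOrder

/-- Complex 2n×2n matrices, written in n×n blocks. -/
abbrev HMat (n : ℕ) : Type := Matrix (Fin n ⊕ Fin n) (Fin n ⊕ Fin n) ℂ

/-- The standard alternating matrix I = ((0,-E),(E,0)). -/
def Imat (n : ℕ) : HMat n := Matrix.fromBlocks 0 (-1) 1 0

/-- The unitary group U(n,n). -/
def UGrp (n : ℕ) : Set (HMat n) := {M | Mᴴ * Imat n * M = Imat n}

/-- The Hermitian upper half-plane: Z = X + iY with X Hermitian and
Y = (Z - Zᴴ)/(2i) Hermitian positive definite. -/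
def UHP (n : ℕ) : Set (Matrix (Fin n) (Fin n) ℂ) :=
  {Z | ((2 * Complex.I)⁻¹ • (Z - Zᴴ)).PosDef}

/-- The action M⟨Z⟩ = (AZ+B)(CZ+D)⁻¹. -/
def matAct {n : ℕ} (M : HMat n) (Z : Matrix (Fin n) (Fin n) ℂ) :
    Matrix (Fin n) (Fin n) ℂ :=
  (M.toBlocks₁₁ * Z + M.toBlocks₁₂) * (M.toBlocks₂₁ * Z + M.toBlocks₂₂)⁻¹

/-- The automorphy factor J(M,Z) = det(CZ+D). -/
def Jfac {n : ℕ} (M : HMat n) (Z : Matrix (Fin n) (Fin n) ℂ) : ℂ :=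
  (M.toBlocks₂₁ * Z + M.toBlocks₂₂).det

/-- The distinguished point iE of the upper half-plane. -/
def iE (n : ℕ) : Matrix (Fin n) (Fin n) ℂ := Complex.I • 1

/-- `L` is the continuous choice of the argument of J(M,Z), normalized so that
`L M (iE)` is the principal value. -/
def IsArgOfJ (n : ℕ) (L : HMat n → Matrix (Fin n) (Fin n) ℂ → ℝ) : Prop :=
  ∀ M ∈ UGrp n, ContinuousOn (L M) (UHP n) ∧
    (∀ Z ∈ UHP n,
      Complex.exp (Complex.I * (L M Z : ℝ)) = Jfac M Z / (‖Jfac M Z‖ : ℂ)) ∧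
    L M (iE n) ∈ Set.Ioc (-Real.pi) Real.pi

/-- w(M,N;Z) = (1/2π)(L(MN,Z) - L(M,N⟨Z⟩) - L(N,Z)). -/
def wAt {n : ℕ} (L : HMat n → Matrix (Fin n) (Fin n) ℂ → ℝ)
    (M N : HMat n) (Z : Matrix (Fin n) (Fin n) ℂ) : ℝ :=
  (L (M * N) Z - L M (matAct N Z) - L N Z) / (2 * Real.pi)

/-- The cocycle w(M,N), i.e. the common value of w(M,N;Z), evaluated at Z = iE. -/
def wcoc {n : ℕ} (L : HMat n → Matrix (Fin n) (Fin n) ℂ → ℝ) (M N : HMat n) : ℝ :=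
  wAt L M N (iE n)


namespace Stmt0Aux

variable {n : ℕ}

lemma posDef_conj {A B : Matrix (Fin n) (Fin n) ℂ} (hA : A.PosDef) (hB : IsUnit B) :
    (Bᴴ * A * B).PosDef := by
  refine Matrix.PosDef.of_dotProduct_mulVec_pos (Matrix.isHermitian_conjTranspose_mul_mul B hA.1) fun x hx => ?_
  have hBx : B *ᵥ x ≠ 0 := by
    have hinj : Function.Injective (B.mulVec) := Matrix.mulVec_injective_iff_isUnit.2 hB
    intro h
    exact hx (hinj (by simpa using h))
  simpa only [star_mulVec, Matrix.dotProduct_mulVec, Matrix.vecMul_vecMul] using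
    hA.dotProduct_mulVec_pos hBx

lemma posDef_smul {A : Matrix (Fin n) (Fin n) ℂ} (hA : A.PosDef) {a : ℝ} (ha : 0 < a) :
    (a • A).PosDef := by
  refine Matrix.PosDef.of_dotProduct_mulVec_pos ?_ fun x hx => ?_
  · show (a • A)ᴴ = a • A
    rw [Matrix.conjTranspose_smul, star_trivial, hA.1.eq]
  · have h1 : star x ⬝ᵥ (a • A) *ᵥ x = (a : ℂ) * (star x ⬝ᵥ A *ᵥ x) := by
      rw [Matrix.smul_mulVec, dotProduct_smul]
      simp [Complex.real_smul]
    rw [h1]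
    exact mul_pos (Complex.zero_lt_real.mpr ha) (hA.dotProduct_mulVec_pos hx)

lemma convex_UHP : Convex ℝ (UHP n) := by
  intro Z hZ Z' hZ' a b ha hb hab
  simp only [UHP, Set.mem_setOf_eq] at hZ hZ' ⊢
  have key : (2 * Complex.I)⁻¹ • ((a • Z + b • Z') - (a • Z + b • Z')ᴴ)
      = a • ((2 * Complex.I)⁻¹ • (Z - Zᴴ)) + b • ((2 * Complex.I)⁻¹ • (Z' - Z'ᴴ)) := by
    ext i j
    simp only [Matrix.smul_apply, Matrix.add_apply, Matrix.sub_apply, Matrix.conjTranspose_apply,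
      smul_eq_mul, Complex.real_smul, Complex.star_def, map_add, _root_.map_mul,
      Complex.conj_ofReal]
    ring
  rw [key]
  rcases ha.eq_or_lt with rfl | ha'
  · simp only [zero_smul, zero_add]
    have : b = 1 := by linarith
    subst this
    simpa using hZ'
  rcases hb.eq_or_lt with rfl | hb'
  · simp only [zero_smul, add_zero]
    have : a = 1 := by linarith
    subst this
    simpa using hZ
  exact (posDef_smul hZ ha').add (posDef_smul hZ' hb')

lemma iE_mem : iE n ∈ UHP n := by
  show ((2 * Complex.I)⁻¹ • (iE n - (iE n)ᴴ)).PosDef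
  have h : (2 * Complex.I)⁻¹ • (iE n - (iE n)ᴴ) = 1 := by
    have h1 : (iE n)ᴴ = (-Complex.I) • (1 : Matrix (Fin n) (Fin n) ℂ) := by
      simp [iE, Matrix.conjTranspose_smul]
    rw [show iE n - (iE n)ᴴ = Complex.I • 1 - (iE n)ᴴ from by rw [iE], h1, ← sub_smul, smul_smul,
      show Complex.I - -Complex.I = 2 * Complex.I by ring,
      inv_mul_cancel₀ (by simp [Complex.I_ne_zero] : (2:ℂ) * Complex.I ≠ 0), one_smul]
  rw [h]
  exact Matrix.PosDef.one


lemma one_mem : (1 : HMat n) ∈ UGrp n := by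
  simp [UGrp, Set.mem_setOf_eq]

lemma mul_mem {M N : HMat n} (hM : M ∈ UGrp n) (hN : N ∈ UGrp n) : M * N ∈ UGrp n := by
  simp only [UGrp, Set.mem_setOf_eq] at *
  rw [Matrix.conjTranspose_mul,
    show Nᴴ * Mᴴ * Imat n * (M * N) = Nᴴ * (Mᴴ * Imat n * M) * N from by noncomm_ring, hM, hN]

lemma ugrp_rel {M : HMat n} (hM : M ∈ UGrp n) :
    (M.toBlocks₂₁ᴴ * M.toBlocks₁₁ - M.toBlocks₁₁ᴴ * M.toBlocks₂₁ = 0) ∧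
    (M.toBlocks₂₁ᴴ * M.toBlocks₁₂ - M.toBlocks₁₁ᴴ * M.toBlocks₂₂ = -1) ∧
    (M.toBlocks₂₂ᴴ * M.toBlocks₁₁ - M.toBlocks₁₂ᴴ * M.toBlocks₂₁ = 1) ∧
    (M.toBlocks₂₂ᴴ * M.toBlocks₁₂ - M.toBlocks₁₂ᴴ * M.toBlocks₂₂ = 0) := by
  have hM' : (Matrix.fromBlocks M.toBlocks₁₁ M.toBlocks₁₂ M.toBlocks₂₁ M.toBlocks₂₂)ᴴ * Imat n *
      (Matrix.fromBlocks M.toBlocks₁₁ M.toBlocks₁₂ M.toBlocks₂₁ M.toBlocks₂₂) = Imat n := by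
    rw [Matrix.fromBlocks_toBlocks]; exact hM
  rw [Imat, Matrix.fromBlocks_conjTranspose, Matrix.fromBlocks_multiply,
    Matrix.fromBlocks_multiply] at hM'
  have h11 := congrArg Matrix.toBlocks₁₁ hM'
  have h12 := congrArg Matrix.toBlocks₁₂ hM'
  have h21 := congrArg Matrix.toBlocks₂₁ hM'
  have h22 := congrArg Matrix.toBlocks₂₂ hM'
  simp only [Matrix.toBlocks_fromBlocks₁₁, Matrix.toBlocks_fromBlocks₁₂,
    Matrix.toBlocks_fromBlocks₂₁, Matrix.toBlocks_fromBlocks₂₂] at h11 h12 h21 h22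
  constructor
  · rw [← h11]; noncomm_ring
  constructor
  · rw [← h12]; noncomm_ring
  constructor
  · rw [← h21]; noncomm_ring
  · rw [← h22]; noncomm_ring

lemma key_identity {M : HMat n} (hM : M ∈ UGrp n) (Z : Matrix (Fin n) (Fin n) ℂ) :
    (M.toBlocks₂₁ * Z + M.toBlocks₂₂)ᴴ * (M.toBlocks₁₁ * Z + M.toBlocks₁₂)
      - (M.toBlocks₁₁ * Z + M.toBlocks₁₂)ᴴ * (M.toBlocks₂₁ * Z + M.toBlocks₂₂)
      = Z - Zᴴ := by
  obtain ⟨e1, e2, e3, e4⟩ := ugrp_rel hM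
  have expand : (M.toBlocks₂₁ * Z + M.toBlocks₂₂)ᴴ * (M.toBlocks₁₁ * Z + M.toBlocks₁₂)
      - (M.toBlocks₁₁ * Z + M.toBlocks₁₂)ᴴ * (M.toBlocks₂₁ * Z + M.toBlocks₂₂)
      = Zᴴ * (M.toBlocks₂₁ᴴ * M.toBlocks₁₁ - M.toBlocks₁₁ᴴ * M.toBlocks₂₁) * Z
        + Zᴴ * (M.toBlocks₂₁ᴴ * M.toBlocks₁₂ - M.toBlocks₁₁ᴴ * M.toBlocks₂₂)
        + (M.toBlocks₂₂ᴴ * M.toBlocks₁₁ - M.toBlocks₁₂ᴴ * M.toBlocks₂₁) * Z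
        + (M.toBlocks₂₂ᴴ * M.toBlocks₁₂ - M.toBlocks₁₂ᴴ * M.toBlocks₂₂) := by
    simp only [Matrix.conjTranspose_add, Matrix.conjTranspose_mul]
    noncomm_ring
  rw [expand, e1, e2, e3, e4]
  simp only [Matrix.mul_zero, Matrix.zero_mul, Matrix.mul_neg, Matrix.mul_one, Matrix.one_mul,
    add_zero, zero_add]
  abel


variable {L : HMat n → Matrix (Fin n) (Fin n) ℂ → ℝ}

lemma Jfac_ne (hL : IsArgOfJ n L) {M : HMat n} {Z : Matrix (Fin n) (Fin n) ℂ}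
    (hM : M ∈ UGrp n) (hZ : Z ∈ UHP n) : Jfac M Z ≠ 0 := by
  intro h
  have he := (hL M hM).2.1 Z hZ
  rw [h] at he
  simp only [norm_zero, Complex.ofReal_zero, div_zero] at he
  exact Complex.exp_ne_zero _ he

lemma isUnit_den (hL : IsArgOfJ n L) {M : HMat n} {Z : Matrix (Fin n) (Fin n) ℂ}
    (hM : M ∈ UGrp n) (hZ : Z ∈ UHP n) :
    IsUnit (M.toBlocks₂₁ * Z + M.toBlocks₂₂).det :=
  isUnit_iff_ne_zero.2 (Jfac_ne hL hM hZ)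

lemma acts (hL : IsArgOfJ n L) {M : HMat n} {Z : Matrix (Fin n) (Fin n) ℂ}
    (hM : M ∈ UGrp n) (hZ : Z ∈ UHP n) : matAct M Z ∈ UHP n := by
  set A := M.toBlocks₁₁; set B := M.toBlocks₁₂; set C := M.toBlocks₂₁; set D := M.toBlocks₂₂
  set P := A * Z + B with hP
  set Q := C * Z + D with hQdef
  have hdet : IsUnit Q.det := isUnit_den hL hM hZ
  have hQQ : Q * Q⁻¹ = 1 := Matrix.mul_nonsing_inv _ hdet
  have hsub : matAct M Z - (matAct M Z)ᴴ = (Q⁻¹)ᴴ * (Qᴴ * P - Pᴴ * Q) * Q⁻¹ := by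
    have h1 : (Q⁻¹)ᴴ * Qᴴ = 1 := by rw [← Matrix.conjTranspose_mul, hQQ, Matrix.conjTranspose_one]
    have hact : matAct M Z = P * Q⁻¹ := rfl
    rw [hact, Matrix.conjTranspose_mul, Matrix.mul_sub, Matrix.sub_mul]
    congr 1
    · rw [← Matrix.mul_assoc, h1, Matrix.one_mul]
    · rw [Matrix.mul_assoc, Matrix.mul_assoc, hQQ, Matrix.mul_one]
  show ((2 * Complex.I)⁻¹ • (matAct M Z - (matAct M Z)ᴴ)).PosDef
  rw [hsub, key_identity hM Z,
    show (2 * Complex.I)⁻¹ • ((Q⁻¹)ᴴ * (Z - Zᴴ) * Q⁻¹)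
      = (Q⁻¹)ᴴ * ((2 * Complex.I)⁻¹ • (Z - Zᴴ)) * Q⁻¹ from by
        rw [Matrix.mul_smul, Matrix.smul_mul]]
  exact posDef_conj hZ (Matrix.isUnit_nonsing_inv_iff.2 (Matrix.isUnit_iff_isUnit_det _|>.2 hdet))

lemma mul_toBlocks₁₁ (M N : HMat n) :
    (M * N).toBlocks₁₁ = M.toBlocks₁₁ * N.toBlocks₁₁ + M.toBlocks₁₂ * N.toBlocks₂₁ := by
  conv_lhs => rw [← Matrix.fromBlocks_toBlocks M, ← Matrix.fromBlocks_toBlocks N,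
    Matrix.fromBlocks_multiply]
  rw [Matrix.toBlocks_fromBlocks₁₁]

lemma mul_toBlocks₁₂ (M N : HMat n) :
    (M * N).toBlocks₁₂ = M.toBlocks₁₁ * N.toBlocks₁₂ + M.toBlocks₁₂ * N.toBlocks₂₂ := by
  conv_lhs => rw [← Matrix.fromBlocks_toBlocks M, ← Matrix.fromBlocks_toBlocks N,
    Matrix.fromBlocks_multiply]
  rw [Matrix.toBlocks_fromBlocks₁₂]

lemma mul_toBlocks₂₁ (M N : HMat n) :
    (M * N).toBlocks₂₁ = M.toBlocks₂₁ * N.toBlocks₁₁ + M.toBlocks₂₂ * N.toBlocks₂₁ := by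
  conv_lhs => rw [← Matrix.fromBlocks_toBlocks M, ← Matrix.fromBlocks_toBlocks N,
    Matrix.fromBlocks_multiply]
  rw [Matrix.toBlocks_fromBlocks₂₁]

lemma mul_toBlocks₂₂ (M N : HMat n) :
    (M * N).toBlocks₂₂ = M.toBlocks₂₁ * N.toBlocks₁₂ + M.toBlocks₂₂ * N.toBlocks₂₂ := by
  conv_lhs => rw [← Matrix.fromBlocks_toBlocks M, ← Matrix.fromBlocks_toBlocks N,
    Matrix.fromBlocks_multiply]
  rw [Matrix.toBlocks_fromBlocks₂₂]

lemma den_mul (hL : IsArgOfJ n L) {M N : HMat n} {Z : Matrix (Fin n) (Fin n) ℂ}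
    (hN : N ∈ UGrp n) (hZ : Z ∈ UHP n) :
    (M.toBlocks₂₁ * matAct N Z + M.toBlocks₂₂) * (N.toBlocks₂₁ * Z + N.toBlocks₂₂)
      = (M * N).toBlocks₂₁ * Z + (M * N).toBlocks₂₂ := by
  have hdet : IsUnit (N.toBlocks₂₁ * Z + N.toBlocks₂₂).det := isUnit_den hL hN hZ
  have hc : (N.toBlocks₁₁ * Z + N.toBlocks₁₂) * (N.toBlocks₂₁ * Z + N.toBlocks₂₂)⁻¹ *
      (N.toBlocks₂₁ * Z + N.toBlocks₂₂) = N.toBlocks₁₁ * Z + N.toBlocks₁₂ := by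
    rw [Matrix.mul_assoc, Matrix.nonsing_inv_mul _ hdet, Matrix.mul_one]
  rw [mul_toBlocks₂₁, mul_toBlocks₂₂, matAct,
    show (M.toBlocks₂₁ * ((N.toBlocks₁₁ * Z + N.toBlocks₁₂) * (N.toBlocks₂₁ * Z + N.toBlocks₂₂)⁻¹)
        + M.toBlocks₂₂) * (N.toBlocks₂₁ * Z + N.toBlocks₂₂)
      = M.toBlocks₂₁ * ((N.toBlocks₁₁ * Z + N.toBlocks₁₂) * (N.toBlocks₂₁ * Z + N.toBlocks₂₂)⁻¹ *
          (N.toBlocks₂₁ * Z + N.toBlocks₂₂)) + M.toBlocks₂₂ * (N.toBlocks₂₁ * Z + N.toBlocks₂₂)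
      from by noncomm_ring, hc]
  noncomm_ring

lemma num_mul (hL : IsArgOfJ n L) {M N : HMat n} {Z : Matrix (Fin n) (Fin n) ℂ}
    (hN : N ∈ UGrp n) (hZ : Z ∈ UHP n) :
    (M.toBlocks₁₁ * matAct N Z + M.toBlocks₁₂) * (N.toBlocks₂₁ * Z + N.toBlocks₂₂)
      = (M * N).toBlocks₁₁ * Z + (M * N).toBlocks₁₂ := by
  have hdet : IsUnit (N.toBlocks₂₁ * Z + N.toBlocks₂₂).det := isUnit_den hL hN hZ
  have hc : (N.toBlocks₁₁ * Z + N.toBlocks₁₂) * (N.toBlocks₂₁ * Z + N.toBlocks₂₂)⁻¹ *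
      (N.toBlocks₂₁ * Z + N.toBlocks₂₂) = N.toBlocks₁₁ * Z + N.toBlocks₁₂ := by
    rw [Matrix.mul_assoc, Matrix.nonsing_inv_mul _ hdet, Matrix.mul_one]
  rw [mul_toBlocks₁₁, mul_toBlocks₁₂, matAct,
    show (M.toBlocks₁₁ * ((N.toBlocks₁₁ * Z + N.toBlocks₁₂) * (N.toBlocks₂₁ * Z + N.toBlocks₂₂)⁻¹)
        + M.toBlocks₁₂) * (N.toBlocks₂₁ * Z + N.toBlocks₂₂)
      = M.toBlocks₁₁ * ((N.toBlocks₁₁ * Z + N.toBlocks₁₂) * (N.toBlocks₂₁ * Z + N.toBlocks₂₂)⁻¹ *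
          (N.toBlocks₂₁ * Z + N.toBlocks₂₂)) + M.toBlocks₁₂ * (N.toBlocks₂₁ * Z + N.toBlocks₂₂)
      from by noncomm_ring, hc]
  noncomm_ring

lemma Jfac_mul (hL : IsArgOfJ n L) {M N : HMat n} {Z : Matrix (Fin n) (Fin n) ℂ}
    (hN : N ∈ UGrp n) (hZ : Z ∈ UHP n) :
    Jfac (M * N) Z = Jfac M (matAct N Z) * Jfac N Z := by
  unfold Jfac
  rw [← den_mul hL hN hZ, Matrix.det_mul]

lemma act_mul (hL : IsArgOfJ n L) {M N : HMat n} {Z : Matrix (Fin n) (Fin n) ℂ}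
    (hN : N ∈ UGrp n) (hZ : Z ∈ UHP n) :
    matAct (M * N) Z = matAct M (matAct N Z) := by
  have hdet : IsUnit (N.toBlocks₂₁ * Z + N.toBlocks₂₂).det := isUnit_den hL hN hZ
  show ((M * N).toBlocks₁₁ * Z + (M * N).toBlocks₁₂) * ((M * N).toBlocks₂₁ * Z + (M * N).toBlocks₂₂)⁻¹
    = matAct M (matAct N Z)
  rw [← num_mul hL hN hZ, ← den_mul hL hN hZ, Matrix.mul_inv_rev, ← Matrix.mul_assoc,
    Matrix.mul_assoc _ _ (N.toBlocks₂₁ * Z + N.toBlocks₂₂)⁻¹,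
    Matrix.mul_nonsing_inv _ hdet, Matrix.mul_one]
  rfl

lemma one_toBlocks₁₁ : (1 : HMat n).toBlocks₁₁ = 1 := by
  rw [← Matrix.fromBlocks_one, Matrix.toBlocks_fromBlocks₁₁]

lemma one_toBlocks₁₂ : (1 : HMat n).toBlocks₁₂ = 0 := by
  rw [← Matrix.fromBlocks_one, Matrix.toBlocks_fromBlocks₁₂]

lemma one_toBlocks₂₁ : (1 : HMat n).toBlocks₂₁ = 0 := by
  rw [← Matrix.fromBlocks_one, Matrix.toBlocks_fromBlocks₂₁]

lemma one_toBlocks₂₂ : (1 : HMat n).toBlocks₂₂ = 1 := by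
  rw [← Matrix.fromBlocks_one, Matrix.toBlocks_fromBlocks₂₂]

lemma act_one (Z : Matrix (Fin n) (Fin n) ℂ) : matAct (1 : HMat n) Z = Z := by
  rw [matAct, one_toBlocks₁₁, one_toBlocks₁₂, one_toBlocks₂₁, one_toBlocks₂₂]
  simp

lemma Jfac_one (Z : Matrix (Fin n) (Fin n) ℂ) : Jfac (1 : HMat n) Z = 1 := by
  rw [Jfac, one_toBlocks₂₁, one_toBlocks₂₂]
  simp


lemma intConst {f : Matrix (Fin n) (Fin n) ℂ → ℝ} (hf : ContinuousOn f (UHP n))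
    (hi : ∀ Z ∈ UHP n, ∃ k : ℤ, f Z = k) :
    ∀ Z ∈ UHP n, ∀ Z' ∈ UHP n, f Z = f Z' := by
  have hpc : IsPreconnected (UHP n) := (convex_UHP (n := n)).isPreconnected
  have key : ∀ Z ∈ UHP n, ∀ Z' ∈ UHP n, ¬ f Z < f Z' := by
    intro Z hZ Z' hZ' hlt
    obtain ⟨k, hk⟩ := hi Z hZ
    obtain ⟨k', hk'⟩ := hi Z' hZ'
    have hkk' : k < k' := by
      rw [hk, hk'] at hlt
      exact_mod_cast hlt
    have hk1 : (k : ℝ) + 1 ≤ (k' : ℝ) := by exact_mod_cast hkk'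
    have hmem : ((k : ℝ) + 1/2) ∈ Set.Icc (f Z) (f Z') := by
      constructor
      · rw [hk]; linarith
      · rw [hk']; linarith
    obtain ⟨z, hz, hfz⟩ := hpc.intermediate_value hZ hZ' hf hmem
    obtain ⟨m, hm⟩ := hi z hz
    have h2 : (2 * m : ℝ) = 2 * k + 1 := by
      rw [hm] at hfz
      linarith
    have h3 : (2 * m : ℤ) = 2 * k + 1 := by exact_mod_cast h2
    omega
  intro Z hZ Z' hZ'
  exact le_antisymm (not_lt.1 (key Z' hZ' Z hZ)) (not_lt.1 (key Z hZ Z' hZ'))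

lemma arg_eq {s : ℝ}
    (h : Complex.exp (Complex.I * (s : ℂ)) = 1) : ∃ k : ℤ, s = 2 * Real.pi * k := by
  obtain ⟨k, hk⟩ := Complex.exp_eq_one_iff.1 h
  refine ⟨k, ?_⟩
  have h' : Complex.I * (s : ℂ) = Complex.I * ((2 * Real.pi * k : ℝ) : ℂ) := by
    rw [hk]; push_cast; ring
  have h'' := mul_left_cancel₀ Complex.I_ne_zero h'
  exact_mod_cast h''

lemma L_one (hL : IsArgOfJ n L) : ∀ Z ∈ UHP n, L 1 Z = 0 := by
  obtain ⟨hc, he, hiE⟩ := hL 1 one_mem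
  have hint : ∀ Z ∈ UHP n, ∃ k : ℤ, L 1 Z = 2 * Real.pi * k := by
    intro Z hZ
    refine arg_eq ?_
    rw [he Z hZ, Jfac_one]
    simp
  have hint' : ∀ Z ∈ UHP n, ∃ k : ℤ, L 1 Z / (2 * Real.pi) = (k : ℝ) := by
    intro Z hZ
    obtain ⟨k, hk⟩ := hint Z hZ
    exact ⟨k, by rw [hk]; field_simp⟩
  have hconst := intConst (hc.div_const _) hint'
  have hiE0 : L 1 (iE n) = 0 := by
    obtain ⟨k, hk⟩ := hint (iE n) iE_mem
    have hpi := Real.pi_pos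
    rcases hiE with ⟨hgt, hle⟩
    rw [hk] at hgt hle
    have hk1 : (k : ℝ) < 1 := by nlinarith
    have hk2 : (-1 : ℝ) < (k : ℝ) := by nlinarith
    have : k = 0 := by
      have a1 : k < 1 := by exact_mod_cast hk1
      have a2 : (-1 : ℤ) < k := by exact_mod_cast hk2
      omega
    rw [hk, this]
    simp
  intro Z hZ
  have := hconst Z hZ (iE n) iE_mem
  rw [hiE0] at this
  have hpi := Real.pi_ne_zero
  field_simp at this
  exact this


lemma wAt_int (hL : IsArgOfJ n L) {M N : HMat n} {Z : Matrix (Fin n) (Fin n) ℂ}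
    (hM : M ∈ UGrp n) (hN : N ∈ UGrp n) (hZ : Z ∈ UHP n) :
    ∃ k : ℤ, wAt L M N Z = (k : ℝ) := by
  have hW : matAct N Z ∈ UHP n := acts hL hN hZ
  have hMN : M * N ∈ UGrp n := mul_mem hM hN
  have e1 := (hL (M * N) hMN).2.1 Z hZ
  have e2 := (hL M hM).2.1 (matAct N Z) hW
  have e3 := (hL N hN).2.1 Z hZ
  have hJ : Jfac (M * N) Z = Jfac M (matAct N Z) * Jfac N Z := Jfac_mul hL hN hZ
  have hA : Jfac M (matAct N Z) ≠ 0 := Jfac_ne hL hM hW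
  have hB : Jfac N Z ≠ 0 := Jfac_ne hL hN hZ
  have hA' : ((‖Jfac M (matAct N Z)‖ : ℝ) : ℂ) ≠ 0 := by
    simpa using hA
  have hB' : ((‖Jfac N Z‖ : ℝ) : ℂ) ≠ 0 := by
    simpa using hB
  have h1 : Complex.exp (Complex.I *
      ((L (M * N) Z - L M (matAct N Z) - L N Z : ℝ) : ℂ)) = 1 := by
    rw [Complex.ofReal_sub, Complex.ofReal_sub, mul_sub, mul_sub, Complex.exp_sub,
      Complex.exp_sub, e1, e2, e3, hJ, norm_mul, Complex.ofReal_mul]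
    field_simp
  obtain ⟨k, hk⟩ := arg_eq h1
  refine ⟨k, ?_⟩
  rw [wAt, hk]
  rw [mul_comm (2 * Real.pi) (k : ℝ), mul_div_assoc,
    div_self (by positivity : (2 : ℝ) * Real.pi ≠ 0), mul_one]

set_option maxHeartbeats 1000000 in
lemma cont_matAct (hL : IsArgOfJ n L) {N : HMat n} (hN : N ∈ UGrp n) :
    ContinuousOn (matAct N) (UHP n) := by
  have hAZB : Continuous fun Z : Matrix (Fin n) (Fin n) ℂ =>
      N.toBlocks₁₁ * Z + N.toBlocks₁₂ :=
    (continuous_const.matrix_mul continuous_id).add continuous_const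
  have hCZD : Continuous fun Z : Matrix (Fin n) (Fin n) ℂ =>
      N.toBlocks₂₁ * Z + N.toBlocks₂₂ :=
    (continuous_const.matrix_mul continuous_id).add continuous_const
  have hdet : ∀ Z ∈ UHP n, (N.toBlocks₂₁ * Z + N.toBlocks₂₂).det ≠ 0 := fun Z hZ =>
    Jfac_ne hL hN hZ
  have hinv : ContinuousOn (fun Z => (N.toBlocks₂₁ * Z + N.toBlocks₂₂)⁻¹) (UHP n) := by
    have heq : (fun Z : Matrix (Fin n) (Fin n) ℂ => (N.toBlocks₂₁ * Z + N.toBlocks₂₂)⁻¹)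
        = fun Z => ((N.toBlocks₂₁ * Z + N.toBlocks₂₂).det)⁻¹ •
            (N.toBlocks₂₁ * Z + N.toBlocks₂₂).adjugate := by
      funext Z
      rw [Matrix.inv_def, Ring.inverse_eq_inv']
    rw [heq]
    exact (hCZD.matrix_det.continuousOn.inv₀ hdet).smul hCZD.matrix_adjugate.continuousOn
  exact (continuous_fst.matrix_mul continuous_snd).comp_continuousOn
    (hAZB.continuousOn.prodMk hinv)

lemma cont_wAt (hL : IsArgOfJ n L) {M N : HMat n} (hM : M ∈ UGrp n) (hN : N ∈ UGrp n) :
    ContinuousOn (wAt L M N) (UHP n) := by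
  have h1 : ContinuousOn (fun Z => L (M * N) Z) (UHP n) := (hL (M * N) (mul_mem hM hN)).1
  have h2 : ContinuousOn (fun Z => L M (matAct N Z)) (UHP n) :=
    (hL M hM).1.comp (cont_matAct hL hN) (fun Z hZ => acts hL hN hZ)
  have h3 : ContinuousOn (fun Z => L N Z) (UHP n) := (hL N hN).1
  exact ((h1.sub h2).sub h3).div_const _


lemma wAt_indep (hL : IsArgOfJ n L) {M N : HMat n} (hM : M ∈ UGrp n) (hN : N ∈ UGrp n) :
    ∀ Z ∈ UHP n, ∀ Z' ∈ UHP n, wAt L M N Z = wAt L M N Z' :=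
  intConst (cont_wAt hL hM hN) (fun _ hZ => wAt_int hL hM hN hZ)

end Stmt0Aux

open Stmt0Aux in
/-- w(M,N;Z) is an integer, independent of Z, and w is a cocycle. -/
theorem stmt0 (n : ℕ) (hn : 1 ≤ n)
    (L : HMat n → Matrix (Fin n) (Fin n) ℂ → ℝ) (hL : IsArgOfJ n L) :
    (∀ M ∈ UGrp n, ∀ N ∈ UGrp n, ∀ Z ∈ UHP n, ∃ k : ℤ, wAt L M N Z = (k : ℝ)) ∧
    (∀ M ∈ UGrp n, ∀ N ∈ UGrp n, ∀ Z ∈ UHP n, ∀ Z' ∈ UHP n,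
      wAt L M N Z = wAt L M N Z') ∧
    (∀ M₁ ∈ UGrp n, ∀ M₂ ∈ UGrp n, ∀ M₃ ∈ UGrp n, ∀ Z ∈ UHP n,
      wAt L (M₁ * M₂) M₃ Z + wAt L M₁ M₂ Z
        = wAt L M₁ (M₂ * M₃) Z + wAt L M₂ M₃ Z) ∧
    (∀ M ∈ UGrp n, ∀ Z ∈ UHP n, wAt L 1 M Z = 0 ∧ wAt L M 1 Z = 0) := by
  refine ⟨fun M hM N hN Z hZ => wAt_int hL hM hN hZ,
    fun M hM N hN Z hZ Z' hZ' => wAt_indep hL hM hN Z hZ Z' hZ',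
    ?_, ?_⟩
  · intro M₁ h₁ M₂ h₂ M₃ h₃ Z hZ
    have hW : matAct M₃ Z ∈ UHP n := acts hL h₃ hZ
    rw [show wAt L M₁ M₂ Z = wAt L M₁ M₂ (matAct M₃ Z) from
      wAt_indep hL h₁ h₂ Z hZ (matAct M₃ Z) hW]
    simp only [wAt]
    rw [mul_assoc M₁ M₂ M₃, act_mul hL h₃ hZ (M := M₂)]
    ring
  · intro M hM Z hZ
    constructor
    · rw [wAt, one_mul, L_one hL (matAct M Z) (acts hL hM hZ)]
      ring
    · rw [wAt, mul_one, act_one, L_one hL Z hZ]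
      ring
end
end

section
/- Let n = 2 and let S be a Hermitian 2×2 complex matrix (S = conj(S)ᵀ), and set M := ((E,0),(S,E)) ∈ U(2,2), where E is the 2×2 identity, and I := ((0,−E),(E,0)). Then w(M,I) = −1 if tr(S) > 0, and w(M,I) = 0 if tr(S) ≤ 0. -/
noncomputable section
open Matrix Complex
open scoped ComplexOrder

section Aux

lemma argOf (θ : ℝ) (u : ℂ) (hu : u ≠ 0)
    (h : Complex.exp (Complex.I * (θ : ℂ)) = u / (‖u‖ : ℂ))
    (hθ : θ ∈ Set.Ioc (-Real.pi) Real.pi) : θ = u.arg := by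
  have h1 : Complex.arg (Complex.exp (Complex.I * θ)) = θ := by
    rw [mul_comm, Complex.exp_mul_I, Complex.arg_cos_add_sin_mul_I hθ]
  have h2 : u / (‖u‖ : ℂ) = ((‖u‖⁻¹ : ℝ) : ℂ) * u := by
    push_cast; ring
  rw [h, h2, Complex.arg_real_mul u (inv_pos.mpr (norm_pos_iff.mpr hu))] at h1
  exact h1.symm

lemma memI : Imat 2 ∈ UGrp 2 := by
  simp [UGrp, Imat, Matrix.fromBlocks_conjTranspose, Matrix.fromBlocks_multiply]

lemma memMul {n : ℕ} {A B : HMat n} (hA : A ∈ UGrp n) (hB : B ∈ UGrp n) :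
    A * B ∈ UGrp n := by
  simp only [UGrp, Set.mem_setOf_eq] at *
  rw [Matrix.conjTranspose_mul]
  have : Bᴴ * Aᴴ * Imat n * (A * B) = Bᴴ * (Aᴴ * Imat n * A) * B := by
    noncomm_ring
  rw [this, hA, hB]

lemma memM (S : Matrix (Fin 2) (Fin 2) ℂ) (hS : Sᴴ = S) :
    (Matrix.fromBlocks 1 0 S 1 : HMat 2) ∈ UGrp 2 := by
  simp [UGrp, Matrix.fromBlocks_conjTranspose, Matrix.fromBlocks_multiply, Imat, hS]

lemma mulMI (S : Matrix (Fin 2) (Fin 2) ℂ) :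
    (Matrix.fromBlocks 1 0 S 1 : HMat 2) * Imat 2 = Matrix.fromBlocks 0 (-1) 1 (-S) := by
  simp [Imat, Matrix.fromBlocks_multiply]

lemma iEmem : iE 2 ∈ UHP 2 := by
  have h2I : Complex.I - star Complex.I = 2 * Complex.I := by
    simp only [Complex.star_def, Complex.conj_I]; ring
  have h : ((2 * Complex.I)⁻¹ • (iE 2 - (iE 2)ᴴ)) = (1 : Matrix (Fin 2) (Fin 2) ℂ) := by
    simp only [iE, Matrix.conjTranspose_smul, Matrix.conjTranspose_one, ← sub_smul, h2I,
      smul_smul]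
    rw [inv_mul_cancel₀ (by simp [Complex.I_ne_zero]), one_smul]
  rw [UHP, Set.mem_setOf_eq, h]
  exact Matrix.PosDef.one

lemma actI : matAct (Imat 2) (iE 2) = iE 2 := by
  have hinv : (Complex.I • (1 : Matrix (Fin 2) (Fin 2) ℂ))⁻¹
      = (-Complex.I) • (1 : Matrix (Fin 2) (Fin 2) ℂ) := by
    apply Matrix.inv_eq_right_inv
    rw [Matrix.smul_mul, Matrix.mul_smul, smul_smul]
    norm_num
  simp [matAct, Imat, hinv, iE, Matrix.toBlocks_fromBlocks₁₁, Matrix.toBlocks_fromBlocks₁₂,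
    Matrix.toBlocks_fromBlocks₂₁, Matrix.toBlocks_fromBlocks₂₂, smul_smul, neg_smul, neg_neg]

end Aux

/-- for M = ((E,0),(S,E)) with S Hermitian, w(M,I) = -1 if tr S > 0
and w(M,I) = 0 if tr S ≤ 0. -/
theorem stmt7 (L : HMat 2 → Matrix (Fin 2) (Fin 2) ℂ → ℝ) (hL : IsArgOfJ 2 L)
    (S : Matrix (Fin 2) (Fin 2) ℂ) (hS : Sᴴ = S)
    (M : HMat 2) (hM : M = Matrix.fromBlocks 1 0 S 1) :
    (0 < S.trace.re → wcoc L M (Imat 2) = -1) ∧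
    (S.trace.re ≤ 0 → wcoc L M (Imat 2) = 0) := by
  -- entry facts for the Hermitian matrix S
  have h00 := congrFun (congrFun hS 0) 0
  have h11 := congrFun (congrFun hS 1) 1
  have h10 := congrFun (congrFun hS 1) 0
  rw [Matrix.conjTranspose_apply] at h00 h11 h10
  simp only [Complex.star_def] at h10
  have ha : S 0 0 = (((S 0 0).re : ℝ) : ℂ) := ((Complex.conj_eq_iff_re.mp h00)).symm
  have hb : S 1 1 = (((S 1 1).re : ℝ) : ℂ) := ((Complex.conj_eq_iff_re.mp h11)).symm
  have hcc : S 0 1 * (starRingEnd ℂ) (S 0 1) = (Complex.normSq (S 0 1) : ℂ) :=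
    Complex.mul_conj (S 0 1)
  -- the key complex number u = J(M, iE)
  set u : ℂ := (((1 : ℝ) - (S 0 0).re * (S 1 1).re + Complex.normSq (S 0 1) : ℝ) : ℂ)
      + (((S 0 0).re + (S 1 1).re : ℝ) : ℂ) * Complex.I with hu_def
  have hJM' : Jfac M (iE 2) = u := by
    rw [hM, Jfac, Matrix.toBlocks_fromBlocks₂₁, Matrix.toBlocks_fromBlocks₂₂, iE,
      Matrix.mul_smul, Matrix.mul_one, Matrix.det_fin_two, hu_def]
    simp only [Matrix.add_apply, Matrix.smul_apply, Matrix.one_apply, smul_eq_mul]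
    rw [ha, hb, ← h10]
    push_cast [Complex.ofReal_re]
    linear_combination (1:ℂ)*hcc
      + (((S 0 0).re:ℂ)*((S 1 1).re:ℂ) - S 0 1*(starRingEnd ℂ) (S 0 1))*Complex.I_sq
  have hJP' : Jfac (M * Imat 2) (iE 2) = -u := by
    rw [hM, mulMI, Jfac, Matrix.toBlocks_fromBlocks₂₁, Matrix.toBlocks_fromBlocks₂₂,
      Matrix.one_mul, Matrix.det_fin_two, hu_def]
    simp only [Matrix.add_apply, Matrix.smul_apply, Matrix.one_apply, smul_eq_mul, iE,
      Matrix.neg_apply]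
    rw [ha, hb, ← h10]
    push_cast [Complex.ofReal_re]
    linear_combination (-1:ℂ)*hcc + Complex.I_sq
  have hJI' : Jfac (Imat 2) (iE 2) = -1 := by
    rw [Jfac, Imat, Matrix.toBlocks_fromBlocks₂₁, Matrix.toBlocks_fromBlocks₂₂,
      Matrix.one_mul, add_zero, iE, Matrix.det_fin_two]
    simp [Matrix.smul_apply, Matrix.one_apply, Complex.I_mul_I]
  -- group memberships and the data of L
  have hMmem : M ∈ UGrp 2 := by rw [hM]; exact memM S hS
  have hPmem : M * Imat 2 ∈ UGrp 2 := memMul hMmem memI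
  obtain ⟨-, hMe, hMi⟩ := hL M hMmem
  obtain ⟨-, hIe, hIi⟩ := hL (Imat 2) memI
  obtain ⟨-, hPe, hPi⟩ := hL (M * Imat 2) hPmem
  -- u is nonzero
  have hune : u ≠ 0 := by
    intro h
    have h2 := hMe (iE 2) iEmem
    rw [hJM', h] at h2
    simp only [norm_zero, Complex.ofReal_zero, div_zero] at h2
    exact Complex.exp_ne_zero _ h2
  -- identify the three L-values with principal arguments
  have hθM : L M (iE 2) = u.arg := by
    apply argOf _ u hune _ hMi
    rw [← hJM']; exact hMe (iE 2) iEmem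
  have hθP : L (M * Imat 2) (iE 2) = (-u).arg := by
    apply argOf _ (-u) (neg_ne_zero.mpr hune) _ hPi
    rw [← hJP']; exact hPe (iE 2) iEmem
  have hθI : L (Imat 2) (iE 2) = Real.pi := by
    have h := argOf (L (Imat 2) (iE 2)) (-1) (by norm_num) ?_ hIi
    · rw [h, Complex.arg_neg_one]
    · rw [← hJI']; exact hIe (iE 2) iEmem
  have hw : wcoc L M (Imat 2)
      = ((-u).arg - u.arg - Real.pi) / (2 * Real.pi) := by
    rw [wcoc, wAt, actI, hθP, hθM, hθI]
  have htr : S.trace.re = (S 0 0).re + (S 1 1).re := by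
    rw [Matrix.trace_fin_two]; simp
  have hui : u.im = (S 0 0).re + (S 1 1).re := by
    rw [hu_def]; simp
  have h2pi : (2 * Real.pi) ≠ 0 := by positivity
  constructor
  · intro hT
    have him : 0 < u.im := by rw [hui, ← htr]; exact hT
    rw [hw, Complex.arg_neg_eq_arg_sub_pi_of_im_pos him, div_eq_iff h2pi]
    ring
  · intro hT
    rcases hT.lt_or_eq with h | h
    · have him : u.im < 0 := by rw [hui, ← htr]; exact h
      rw [hw, Complex.arg_neg_eq_arg_add_pi_of_im_neg him, div_eq_iff h2pi]
      ring
    · have ht0 : (S 0 0).re + (S 1 1).re = 0 := by rw [← htr, ← h]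
      have haeq : (S 0 0).re = -(S 1 1).re := by linarith
      have hr : (0 : ℝ) < 1 - (S 0 0).re * (S 1 1).re + Complex.normSq (S 0 1) := by
        rw [haeq]
        nlinarith [Complex.normSq_nonneg (S 0 1), sq_nonneg ((S 1 1).re)]
      have hu' : u = (((1 : ℝ) - (S 0 0).re * (S 1 1).re + Complex.normSq (S 0 1) : ℝ) : ℂ) := by
        rw [hu_def, ht0]; simp
      have hau : u.arg = 0 := by rw [hu', Complex.arg_ofReal_of_nonneg hr.le]
      have hanu : (-u).arg = Real.pi := by
        rw [hu', ← Complex.ofReal_neg, Complex.arg_ofReal_of_neg (by linarith)]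
      rw [hw, hau, hanu, div_eq_iff h2pi]
      ring
end
end
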